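/- arXiv:0909.1594 — 2 statements merged into one kernel-verified Lean document; each statement's English description precedes it below -/
import Mathlib

section
/- A token (q_n) is uniquely determined by the sequence of derivatives q_n'(0): if (q_n) and (r_n) are tokens with q_n'(0) = r_n'(0) for all n ≥ 1, then q_n = r_n for all n. -/
open Polynomial Finset

/-- A token vanishes at 0 for positive indices. -/
lemma token_eval_zero (q : ℕ → Polynomial ℝ) (hq0 : q 0 = 1)
    (htok : ∀ n (x y : ℝ), (q n).eval (x + y) =
      ∑ k ∈ range (n + 1), (q k).eval y * (q (n - k)).eval x) :
    ∀ n, 1 ≤ n → (q n).eval 0 = 0 := by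
  intro n
  induction n using Nat.strong_induction_on with
  | _ n ih =>
    intro hn
    obtain ⟨m, rfl⟩ : ∃ m, n = m + 1 := ⟨n - 1, (Nat.succ_pred_eq_of_pos hn).symm⟩
    have h := htok (m + 1) 0 0
    rw [add_zero, Finset.sum_range_succ, Finset.sum_range_succ'] at h
    have hmid : ∀ k ∈ range m,
        (q (k + 1)).eval 0 * (q (m + 1 - (k + 1))).eval 0 = 0 := by
      intro k hk
      have hkm := Finset.mem_range.mp hk
      rw [ih (k + 1) (by omega) (by omega)]
      ring
    rw [Finset.sum_congr rfl hmid, Finset.sum_const_zero] at h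
    simp [hq0] at h
    linarith

/-- The derivative formula for a token. -/
lemma token_derivative (q : ℕ → Polynomial ℝ) (hq0 : q 0 = 1)
    (htok : ∀ n (x y : ℝ), (q n).eval (x + y) =
      ∑ k ∈ range (n + 1), (q k).eval y * (q (n - k)).eval x) (n : ℕ) :
    derivative (q n) =
      ∑ k ∈ range (n + 1), C ((derivative (q k)).eval 0) * q (n - k) := by
  have key : ∀ x : ℝ, (q n).comp (X + C x) =
      ∑ k ∈ range (n + 1), C ((q (n - k)).eval x) * q k := by
    intro x
    apply Polynomial.funext
    intro y
    simp only [eval_comp, eval_add, eval_X, eval_C, eval_finset_sum, eval_mul]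
    rw [add_comm y x, htok n x y]
    exact Finset.sum_congr rfl fun k _ => by ring
  apply Polynomial.funext
  intro x
  have h := congrArg (fun p => (derivative p).eval 0) (key x)
  simp only [derivative_comp, derivative_add, derivative_X, derivative_C,
    add_zero, eval_mul, eval_comp, eval_add, eval_X, eval_C, eval_one,
    zero_add, one_mul, derivative_sum, derivative_C_mul, eval_finset_sum] at h
  rw [h, eval_finset_sum]
  exact Finset.sum_congr rfl fun k _ => by simp [eval_mul]; ring

theorem token_determined_by_derivatives (q r : ℕ → Polynomial ℝ)
    (hqdeg : ∀ n, (q n).degree = n) (hrdeg : ∀ n, (r n).degree = n)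
    (hq0 : q 0 = 1) (hr0 : r 0 = 1)
    (hqtoken : ∀ n (x y : ℝ), (q n).eval (x + y) =
      ∑ k ∈ range (n + 1), (q k).eval y * (q (n - k)).eval x)
    (hrtoken : ∀ n (x y : ℝ), (r n).eval (x + y) =
      ∑ k ∈ range (n + 1), (r k).eval y * (r (n - k)).eval x)
    (hder : ∀ n, 1 ≤ n →
      (derivative (q n)).eval 0 = (derivative (r n)).eval 0) :
    ∀ n, q n = r n := by
  intro n
  induction n using Nat.strong_induction_on with
  | _ n ih =>
    rcases Nat.eq_zero_or_pos n with rfl | hn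
    · rw [hq0, hr0]
    · have hd : derivative (q n) = derivative (r n) := by
        rw [token_derivative q hq0 hqtoken n, token_derivative r hr0 hrtoken n]
        refine Finset.sum_congr rfl fun k hk => ?_
        rcases Nat.eq_zero_or_pos k with rfl | hk1
        · simp [hq0, hr0]
        · have hkn : k ≤ n := Nat.lt_succ_iff.mp (Finset.mem_range.mp hk)
          rw [hder k hk1, ih (n - k) (by omega)]
      -- q n - r n has zero derivative, hence is constant
      have hdz : derivative (q n - r n) = 0 := by
        rw [derivative_sub, hd, sub_self]
      have hnd : (q n - r n).natDegree = 0 :=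
        natDegree_eq_zero_of_derivative_eq_zero hdz
      have hC := Polynomial.eq_C_of_natDegree_eq_zero hnd
      have he : (q n - r n).eval 0 = 0 := by
        rw [eval_sub, token_eval_zero q hq0 hqtoken n hn,
          token_eval_zero r hr0 hrtoken n hn, sub_self]
      have hc0 : (q n - r n).coeff 0 = 0 := by rwa [coeff_zero_eq_eval_zero]
      have : q n - r n = 0 := by rw [hC, hc0, map_zero]
      exact sub_eq_zero.mp this
end

section
/- The Abel polynomials p_n(x) = x(x − na)^{n−1} (with p_0 = 1), for a fixed parameter a, form a polynomial sequence of binomial type: p_n(x+y) = Σ_{k=0}^n C(n,k) p_k(x) p_{n-k}(y). -/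
open Finset

/-- The Abel polynomials `p₀ = 1`, `pₙ(x) = x (x - n a)^(n-1)`. -/
noncomputable def abelPoly (a : ℝ) (n : ℕ) (x : ℝ) : ℝ :=
  if n = 0 then 1 else x * (x - n * a) ^ (n - 1)

/-- derivative value of `abelPoly a k` at `x` -/
noncomputable def abelD (a : ℝ) (k : ℕ) (x : ℝ) : ℝ :=
  if k = 0 then 0 else k * abelPoly a (k - 1) (x - a)

lemma abelPoly_zero (a : ℝ) (x : ℝ) : abelPoly a 0 x = 1 := rfl

lemma abelPoly_succ (a : ℝ) (m : ℕ) (x : ℝ) :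
    abelPoly a (m + 1) x = x * (x - ((m : ℝ) + 1) * a) ^ m := by
  simp [abelPoly]

lemma abelD_succ (a : ℝ) (m : ℕ) (x : ℝ) :
    abelD a (m + 1) x = ((m : ℝ) + 1) * abelPoly a m (x - a) := by
  simp [abelD]

lemma abelPoly_apply_zero (a : ℝ) (k : ℕ) (hk : k ≠ 0) : abelPoly a k 0 = 0 := by
  obtain ⟨m, rfl⟩ := Nat.exists_eq_succ_of_ne_zero hk
  simp [abelPoly_succ]

lemma hasDerivAt_abelPoly (a : ℝ) (k : ℕ) (x : ℝ) :
    HasDerivAt (fun x => abelPoly a k x) (abelD a k x) x := by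
  match k with
  | 0 => simpa [abelPoly, abelD] using hasDerivAt_const x (1 : ℝ)
  | m + 1 =>
    have hfun : (fun x => abelPoly a (m + 1) x)
        = fun x : ℝ => x * (x - ((m : ℝ) + 1) * a) ^ m :=
      funext fun x => abelPoly_succ a m x
    rw [hfun]
    have h : HasDerivAt (fun x : ℝ => x * (x - ((m : ℝ) + 1) * a) ^ m)
        (1 * (x - ((m : ℝ) + 1) * a) ^ m
          + x * ((m : ℝ) * (x - ((m : ℝ) + 1) * a) ^ (m - 1) * 1)) x :=
      (hasDerivAt_id x).mul (((hasDerivAt_id x).sub_const _).pow m)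
    have h2 : (1 * (x - ((m : ℝ) + 1) * a) ^ m
          + x * ((m : ℝ) * (x - ((m : ℝ) + 1) * a) ^ (m - 1) * 1))
        = abelD a (m + 1) x := by
      rw [abelD_succ]
      match m with
      | 0 => simp [abelPoly_zero]
      | s + 1 =>
        rw [abelPoly_succ]
        have hc : (x - a) - ((s : ℝ) + 1) * a = x - ((s : ℝ) + 1 + 1) * a := by ring
        rw [hc, Nat.add_sub_cancel, pow_succ]
        push_cast
        ring
    exact h2 ▸ h

theorem abel_binomial_type (a : ℝ) :
    ∀ (n : ℕ) (x y : ℝ), abelPoly a n (x + y) =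
      ∑ k ∈ range (n + 1), (n.choose k : ℝ) * abelPoly a k x * abelPoly a (n - k) y := by
  intro n
  induction n with
  | zero => intro x y; simp [abelPoly]
  | succ n ih =>
    intro x y
    set f : ℝ → ℝ := fun x => abelPoly a (n + 1) (x + y) with hf
    set g : ℝ → ℝ := fun x => ∑ k ∈ range (n + 1 + 1),
      ((n + 1).choose k : ℝ) * abelPoly a k x * abelPoly a (n + 1 - k) y with hg
    suffices h : f = g by exact congrFun h x
    have hder : ∀ x : ℝ, HasDerivAt f (((n : ℝ) + 1) * abelPoly a n (x - a + y)) x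
        ∧ HasDerivAt g (((n : ℝ) + 1) * abelPoly a n (x - a + y)) x := by
      intro x
      constructor
      · have h1 : HasDerivAt (fun x : ℝ => abelPoly a (n + 1) (x + y))
            (abelD a (n + 1) (x + y) * 1) x :=
          (hasDerivAt_abelPoly a (n + 1) (x + y)).comp (h₂ := fun x => abelPoly a (n + 1) x)
            (h := fun x : ℝ => x + y) x
            ((hasDerivAt_id x).add_const y)
        have he : abelD a (n + 1) (x + y) * 1 = ((n : ℝ) + 1) * abelPoly a n (x - a + y) := by
          rw [abelD_succ, mul_one]
          congr 2
          ring
        exact he ▸ h1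
      · have h1 : HasDerivAt g (∑ k ∈ range (n + 1 + 1),
            ((n + 1).choose k : ℝ) * abelD a k x * abelPoly a (n + 1 - k) y) x := by
          rw [hg]
          apply HasDerivAt.fun_sum
          intro k _
          have := ((hasDerivAt_abelPoly a k x).const_mul (((n + 1).choose k : ℝ))).mul_const
            (abelPoly a (n + 1 - k) y)
          convert this using 1
        have h2 : (∑ k ∈ range (n + 1 + 1),
            ((n + 1).choose k : ℝ) * abelD a k x * abelPoly a (n + 1 - k) y)
            = ((n : ℝ) + 1) * abelPoly a n (x - a + y) := by
          rw [Finset.sum_range_succ']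
          have hz : ((n + 1).choose 0 : ℝ) * abelD a 0 x * abelPoly a (n + 1 - 0) y = 0 := by
            simp [abelD]
          rw [hz, add_zero]
          have hterm : ∀ j ∈ range (n + 1),
              ((n + 1).choose (j + 1) : ℝ) * abelD a (j + 1) x * abelPoly a (n + 1 - (j + 1)) y
              = ((n : ℝ) + 1) * ((n.choose j : ℝ) * abelPoly a j (x - a) * abelPoly a (n - j) y) := by
            intro j _
            have hchn : (n + 1) * n.choose j = (n + 1).choose (j + 1) * (j + 1) := by
              simpa [Nat.succ_eq_add_one] using Nat.add_one_mul_choose_eq n j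
            have hch : ((n : ℝ) + 1) * (n.choose j : ℝ)
                = ((n + 1).choose (j + 1) : ℝ) * ((j : ℝ) + 1) := by
              exact_mod_cast congrArg (Nat.cast : ℕ → ℝ) hchn
            rw [abelD_succ]
            have : (n + 1 : ℕ) - (j + 1) = n - j := by omega
            rw [this]
            linear_combination (-(abelPoly a j (x - a) * abelPoly a (n - j) y)) * hch
          rw [Finset.sum_congr rfl hterm, ← Finset.mul_sum]
          congr 1
          exact (ih (x - a) y).symm
        exact h2 ▸ h1
    have h0 : f 0 = g 0 := by
      rw [hf, hg]
      simp only [zero_add]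
      rw [Finset.sum_range_succ']
      have hz : ∀ j ∈ range (n + 1),
          ((n + 1).choose (j + 1) : ℝ) * abelPoly a (j + 1) 0 * abelPoly a (n + 1 - (j + 1)) y = 0 := by
        intro j _
        rw [abelPoly_apply_zero a (j + 1) (Nat.succ_ne_zero j)]
        ring
      rw [Finset.sum_congr rfl hz]
      simp [abelPoly_zero]
    have hdiff : Differentiable ℝ (f - g) := fun x =>
      (((hder x).1).sub ((hder x).2)).differentiableAt
    have hderiv0 : ∀ x, deriv (f - g) x = 0 := by
      intro x
      have := ((hder x).1).sub ((hder x).2)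
      simpa using this.deriv
    funext z
    have hc := is_const_of_deriv_eq_zero hdiff hderiv0 z 0
    have hfg0 : (f - g) 0 = 0 := by simp [h0]
    have : (f - g) z = 0 := by rw [hc, hfg0]
    simpa [sub_eq_zero] using this
end
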